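/- Let M be a random n×n real matrix with rows R₁,…,Rₙ. For η ∈ (0,1), let 𝒢_L(η) be the event that M has no nontrivial (1−η)n-sparse left null vectors. For k ∈ [n] let ℛ_k = {corank(M) ≥ k}. For a tuple (i₁,…,i_k) ∈ [n]^k of distinct indices, let V_{(i₁,…,i_k)} = span(R_i : i ∉ {i₁,…,i_k}) and let 𝒮_{(i₁,…,i_k)} be the event that R_{i₁},…,R_{i_k} all lie in V_{(i₁,…,i_k)}. Let k ∈ [n/2], and let 𝕀 = (I₁,…,I_k) be sampled uniformly without replacement from [n], independently of M. Then for every η ∈ (0, 1/(2k)), P(ℛ_k ∧ 𝒢_L(η)) ≤ (1/(1−2ηk)) · P(𝒮_𝕀 ∧ 𝒢_L(η)). -/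

import Mathlib

open scoped Classical
open MeasureTheory Finset
open scoped ENNReal

noncomputable section

namespace CorankAux

variable {n : ℕ}

/-- The linear map sending coefficients to the corresponding combination of rows of `X`
indexed by `T`. -/
def combo (X : Fin n → Fin n → ℝ) (T : Finset (Fin n)) : (Fin n → ℝ) →ₗ[ℝ] (Fin n → ℝ) where
  toFun c := ∑ i ∈ T, c i • X i
  map_add' a b := by simp [add_smul, Finset.sum_add_distrib]
  map_smul' r a := by simp [Finset.smul_sum, smul_smul]

lemma range_combo (X : Fin n → Fin n → ℝ) (T : Finset (Fin n)) :
    LinearMap.range (combo X T) = Submodule.span ℝ (X '' ↑T) := by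
  apply le_antisymm
  · rintro _ ⟨c, rfl⟩
    exact Submodule.sum_mem _ fun i hi =>
      Submodule.smul_mem _ _ (Submodule.subset_span ⟨i, hi, rfl⟩)
  · rw [Submodule.span_le]
    rintro _ ⟨i, hi, rfl⟩
    refine ⟨Pi.single i 1, ?_⟩
    have hrfl : (combo X T) (Pi.single i (1:ℝ)) = ∑ j ∈ T, (Pi.single i (1:ℝ) : Fin n → ℝ) j • X j := rfl
    rw [hrfl, Finset.sum_eq_single i]
    · simp
    · intro j _ hj; rw [Pi.single_eq_of_ne hj]; simp
    · intro h; exact absurd hi h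

lemma dense_rat_pi :
    Dense (Set.range (fun c : Fin n → ℚ => (fun i => (c i : ℝ) : Fin n → ℝ))) := by
  rw [Metric.dense_iff]
  intro x r hr
  have : ∀ i : Fin n, ∃ q : ℚ, x i < q ∧ (q : ℝ) < x i + r := fun i =>
    exists_rat_btwn (by linarith)
  choose c hc1 hc2 using this
  refine ⟨fun i => (c i : ℝ), ?_, ⟨c, rfl⟩⟩
  rw [Metric.mem_ball, dist_pi_lt_iff hr]
  intro i
  rw [Real.dist_eq, abs_lt]
  constructor <;> linarith [hc1 i, hc2 i]

lemma measurableSet_memSpan (T : Finset (Fin n)) (i₀ : Fin n) :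
    MeasurableSet {X : Fin n → Fin n → ℝ | X i₀ ∈ Submodule.span ℝ (X '' ↑T)} := by
  have hset : {X : Fin n → Fin n → ℝ | X i₀ ∈ Submodule.span ℝ (X '' ↑T)} =
      ⋂ (q : {q : ℚ // 0 < q}), ⋃ (c : Fin n → ℚ),
        {X | ‖X i₀ - ∑ i ∈ T, (c i : ℝ) • X i‖ < (q : ℚ)} := by
    ext X
    simp only [Set.mem_setOf_eq, Set.mem_iInter, Set.mem_iUnion]
    constructor
    · intro hX q
      have hmem : X i₀ ∈ Set.range (combo X T) := by
        rw [← SetLike.mem_coe, ← range_combo X T] at hX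
        exact hX
      have hcont : Continuous (combo X T) := (combo X T).continuous_of_finiteDimensional
      have hsub : Set.range (combo X T) ⊆
          closure ((combo X T) '' (Set.range (fun c : Fin n → ℚ => (fun i => (c i : ℝ))))) := by
        rw [← Set.image_univ, ← (dense_rat_pi (n := n)).closure_eq]
        exact image_closure_subset_closure_image hcont
      have := hsub hmem
      rw [Metric.mem_closure_iff] at this
      obtain ⟨y, hy, hdy⟩ := this (q : ℚ) (by exact_mod_cast q.2)
      obtain ⟨-, ⟨c, rfl⟩, rfl⟩ := hy
      refine ⟨c, ?_⟩
      rw [← dist_eq_norm]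
      exact hdy
    · intro hX
      have hclosed : IsClosed ((Submodule.span ℝ (X '' ↑T) : Submodule ℝ (Fin n → ℝ)) : Set (Fin n → ℝ)) :=
        Submodule.closed_of_finiteDimensional _
      rw [← SetLike.mem_coe, ← hclosed.closure_eq, Metric.mem_closure_iff]
      intro ε hε
      obtain ⟨q, hq0, hqε⟩ := exists_rat_btwn hε
      obtain ⟨c, hc⟩ := hX ⟨q, by exact_mod_cast hq0⟩
      refine ⟨∑ i ∈ T, (c i : ℝ) • X i, ?_, ?_⟩
      · exact Submodule.sum_mem _ fun i hi =>
          Submodule.smul_mem _ _ (Submodule.subset_span ⟨i, hi, rfl⟩)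
      · rw [dist_eq_norm]
        exact hc.trans hqε
  rw [hset]
  refine MeasurableSet.iInter fun q => MeasurableSet.iUnion fun c => ?_
  have hcont : Continuous fun X : Fin n → Fin n → ℝ => ‖X i₀ - ∑ i ∈ T, (c i : ℝ) • X i‖ := by
    apply Continuous.norm
    exact (continuous_apply i₀).sub
      (continuous_finset_sum _ fun i _ => by fun_prop)
  exact measurableSet_lt hcont.measurable measurable_const

lemma vecMul_eq_sum' (y : Fin n → ℝ) (X : Fin n → Fin n → ℝ) :
    Matrix.vecMul y (Matrix.of X) = ∑ i, y i • X i := by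
  ext j
  simp [Matrix.vecMul, dotProduct, Finset.sum_apply]

lemma exists_sparse_iff (X : Fin n → Fin n → ℝ) (c : ℝ) :
    (∃ y : Fin n → ℝ, y ≠ 0 ∧ ((Finset.univ.filter fun i => y i ≠ 0).card : ℝ) ≤ c ∧
        Matrix.vecMul y (Matrix.of X) = 0) ↔
      ∃ t : Finset (Fin n), (t.card : ℝ) ≤ c ∧ ∃ i₀ ∈ t,
        X i₀ ∈ Submodule.span ℝ (X '' ↑(t.erase i₀)) := by
  constructor
  · rintro ⟨y, hy0, hycard, hyv⟩
    obtain ⟨i₀, hi₀'⟩ := Function.ne_iff.1 hy0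
    have hi₀ : y i₀ ≠ 0 := by simpa using hi₀'
    set t := Finset.univ.filter (fun i => y i ≠ 0) with ht
    have hi₀t : i₀ ∈ t := by simp [ht, hi₀]
    refine ⟨t, hycard, i₀, hi₀t, ?_⟩
    have hsum0 : ∑ i, y i • X i = 0 := by rw [← vecMul_eq_sum' y X]; exact hyv
    have hsum : ∑ i ∈ t, y i • X i = 0 := by
      rw [← hsum0]
      exact Finset.sum_subset (Finset.subset_univ t) (fun i _ hi => by
        simp only [ht, Finset.mem_filter, Finset.mem_univ, true_and, not_not] at hi
        rw [hi, zero_smul])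
    have h2 : y i₀ • X i₀ + ∑ i ∈ t.erase i₀, y i • X i = 0 := by
      rw [← hsum]; exact Finset.add_sum_erase t (fun i => y i • X i) hi₀t
    have h3 : y i₀ • X i₀ = -(∑ i ∈ t.erase i₀, y i • X i) :=
      eq_neg_of_add_eq_zero_left h2
    have hX : X i₀ = (y i₀)⁻¹ • (-(∑ i ∈ t.erase i₀, y i • X i)) := by
      rw [← h3, inv_smul_smul₀ hi₀]
    rw [hX]
    refine Submodule.smul_mem _ _ (Submodule.neg_mem _ (Submodule.sum_mem _ fun i hi => ?_))
    exact Submodule.smul_mem _ _ (Submodule.subset_span ⟨i, Finset.mem_coe.2 hi, rfl⟩)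
  · rintro ⟨t, htc, i₀, hi₀t, hspan⟩
    set e := t.erase i₀ with he
    have himg : X '' ↑e = Set.range (fun i : ↥e => X i) :=
      Set.image_eq_range _ _
    rw [himg, Submodule.mem_span_range_iff_exists_fun] at hspan
    obtain ⟨c', hc⟩ := hspan
    refine ⟨fun i => (if i = i₀ then (1:ℝ) else 0) - (if h : i ∈ e then c' ⟨i, h⟩ else 0),
      ?_, ?_, ?_⟩
    · intro h
      have := congrFun h i₀
      simp [he, Finset.notMem_erase] at this
    · have hsub : (Finset.univ.filter fun i =>
          ((if i = i₀ then (1:ℝ) else 0) - (if h : i ∈ e then c' ⟨i, h⟩ else 0)) ≠ 0) ⊆ t := by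
        intro i hi
        simp only [Finset.mem_filter, Finset.mem_univ, true_and] at hi
        by_contra hit
        have h1 : i ≠ i₀ := fun h => hit (h ▸ hi₀t)
        have h2 : i ∉ e := fun h => hit (Finset.mem_of_mem_erase h)
        simp [h1, h2] at hi
      calc ((Finset.univ.filter _).card : ℝ) ≤ (t.card : ℝ) := by
            exact_mod_cast Finset.card_le_card hsub
        _ ≤ c := htc
    · rw [vecMul_eq_sum']
      have hsplit : ∑ i, ((if i = i₀ then (1:ℝ) else 0) -
            (if h : i ∈ e then c' ⟨i, h⟩ else 0)) • X i =
          (∑ i, (if i = i₀ then (1:ℝ) else 0) • X i) -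
            ∑ i, (if h : i ∈ e then c' ⟨i, h⟩ else 0) • X i := by
        rw [← Finset.sum_sub_distrib]
        exact Finset.sum_congr rfl fun i _ => by rw [sub_smul]
      rw [hsplit]
      have h1 : ∑ i, (if i = i₀ then (1:ℝ) else 0) • X i = X i₀ := by
        rw [Finset.sum_eq_single i₀] <;> simp +contextual
      have h2 : ∑ i, (if h : i ∈ e then c' ⟨i, h⟩ else 0) • X i = X i₀ := by
        rw [← hc]
        rw [← Finset.sum_subset (Finset.subset_univ e) (fun i _ hi => by simp [hi])]
        rw [← Finset.sum_attach e (fun i => (if h : i ∈ e then c' ⟨i, h⟩ else 0) • X i)]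
        rw [Finset.univ_eq_attach]
        exact Finset.sum_congr rfl fun x _ => by rw [dif_pos x.2]
      rw [h1, h2, sub_self]

lemma measurableSet_G (c : ℝ) :
    MeasurableSet {X : Fin n → Fin n → ℝ | ∃ y : Fin n → ℝ, y ≠ 0 ∧
      ((Finset.univ.filter fun i => y i ≠ 0).card : ℝ) ≤ c ∧
      Matrix.vecMul y (Matrix.of X) = 0} := by
  have hset : {X : Fin n → Fin n → ℝ | ∃ y : Fin n → ℝ, y ≠ 0 ∧
      ((Finset.univ.filter fun i => y i ≠ 0).card : ℝ) ≤ c ∧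
      Matrix.vecMul y (Matrix.of X) = 0} =
      ⋃ (t : Finset (Fin n)) (i₀ : Fin n) (_ : (t.card : ℝ) ≤ c ∧ i₀ ∈ t),
        {X : Fin n → Fin n → ℝ | X i₀ ∈ Submodule.span ℝ (X '' ↑(t.erase i₀))} := by
    ext X
    rw [Set.mem_setOf_eq, exists_sparse_iff]
    simp only [Set.mem_iUnion]
    constructor
    · rintro ⟨t, htc, i₀, hi₀, hs⟩; exact ⟨t, i₀, ⟨htc, hi₀⟩, hs⟩
    · rintro ⟨t, i₀, ⟨htc, hi₀⟩, hs⟩; exact ⟨t, htc, i₀, hi₀, hs⟩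
  rw [hset]
  exact MeasurableSet.iUnion fun t => MeasurableSet.iUnion fun i₀ =>
    MeasurableSet.iUnion fun _ => measurableSet_memSpan _ _

variable {k : ℕ}

/-- The set of "bad" indices `v`: every left null vector vanishing on `g l'` for `l' < l`
also vanishes at `v`. -/
def BadSet (X : Fin n → Fin n → ℝ) (g : Fin k → Fin n) (l : Fin k) : Finset (Fin n) :=
  Finset.univ.filter fun v => ∀ y : Fin n → ℝ,
    Matrix.vecMul y (Matrix.of X) = 0 → (∀ l' : Fin k, l' < l → y (g l') = 0) → y v = 0

lemma badSet_congr (X : Fin n → Fin n → ℝ) {g g' : Fin k → Fin n} (l : Fin k)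
    (h : ∀ l' : Fin k, l' < l → g l' = g' l') : BadSet X g l = BadSet X g' l := by
  unfold BadSet
  apply Finset.filter_congr
  intro v _
  constructor
  · intro hv y h0 hcon
    exact hv y h0 fun l' hl' => by rw [h l' hl']; exact hcon l' hl'
  · intro hv y h0 hcon
    exact hv y h0 fun l' hl' => by rw [← h l' hl']; exact hcon l' hl'

lemma good_of_notBad (X : Fin n → Fin n → ℝ) {g : Fin k → Fin n} (hg : Function.Injective g)
    (hnb : ∀ l, g l ∉ BadSet X g l) (m : Fin k) :
    X (g m) ∈ Submodule.span ℝ (X '' {i : Fin n | ∀ l : Fin k, i ≠ g l}) := by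
  have hw : ∀ l : Fin k, ∃ y : Fin n → ℝ, Matrix.vecMul y (Matrix.of X) = 0 ∧
      (∀ l' : Fin k, l' < l → y (g l') = 0) ∧ y (g l) ≠ 0 := by
    intro l
    have h := hnb l
    simp only [BadSet, Finset.mem_filter, Finset.mem_univ, true_and] at h
    push_neg at h
    exact h
  choose y hy1 hy2 hy3 using hw
  set B : Matrix (Fin k) (Fin k) ℝ := Matrix.of fun l m' => y l (g m') with hB
  have hBT : B.BlockTriangular id := fun i j hji => hy2 i j hji
  have hdet : B.det ≠ 0 := by
    rw [Matrix.det_of_upperTriangular hBT]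
    exact Finset.prod_ne_zero_iff.2 fun l _ => hy3 l
  have hinvB : B⁻¹ * B = 1 := Matrix.nonsing_inv_mul B (Ne.isUnit hdet)
  set z : Fin n → ℝ := fun i => ∑ l, B⁻¹ m l * y l i with hz
  have hznull : ∑ i, z i • X i = 0 := by
    have h1 : ∀ i, z i • X i = ∑ l, (B⁻¹ m l) • (y l i • X i) := by
      intro i
      rw [hz, Finset.sum_smul]
      exact Finset.sum_congr rfl fun l _ => by rw [mul_smul]
    calc ∑ i, z i • X i = ∑ i, ∑ l, (B⁻¹ m l) • (y l i • X i) :=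
          Finset.sum_congr rfl fun i _ => h1 i
      _ = ∑ l, ∑ i, (B⁻¹ m l) • (y l i • X i) := Finset.sum_comm
      _ = ∑ l : Fin k, (B⁻¹ m l) • Matrix.vecMul (y l) (Matrix.of X) := by
          refine Finset.sum_congr rfl fun l _ => ?_
          rw [vecMul_eq_sum', Finset.smul_sum]
      _ = 0 := by simp [hy1]
  have hzg : ∀ j : Fin k, z (g j) = if m = j then 1 else 0 := by
    intro j
    have h2 : z (g j) = (B⁻¹ * B) m j := by
      rw [Matrix.mul_apply]; rfl
    rw [h2, hinvB, Matrix.one_apply]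
  have hvm : X (g m) = ∑ i, ((if i = g m then (1:ℝ) else 0) - z i) • X i := by
    have hsplit : ∑ i, ((if i = g m then (1:ℝ) else 0) - z i) • X i =
        (∑ i, (if i = g m then (1:ℝ) else 0) • X i) - ∑ i, z i • X i := by
      rw [← Finset.sum_sub_distrib]
      exact Finset.sum_congr rfl fun i _ => by rw [sub_smul]
    rw [hsplit, hznull, sub_zero, Finset.sum_eq_single (g m)] <;> simp +contextual
  rw [hvm]
  refine Submodule.sum_mem _ fun i _ => ?_
  by_cases hzero : ((if i = g m then (1:ℝ) else 0) - z i) = 0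
  · rw [hzero, zero_smul]; exact Submodule.zero_mem _
  · refine Submodule.smul_mem _ _ (Submodule.subset_span ⟨i, fun l heq => ?_, rfl⟩)
    apply hzero
    rw [heq, hzg l]
    by_cases hlm : l = m
    · subst hlm; simp
    · rw [if_neg (fun h : g l = g m => hlm (hg h)), if_neg (fun h : m = l => hlm h.symm),
        sub_zero]

lemma finrank_ker_ge (X : Fin n → Fin n → ℝ) (hrank : (Matrix.of X).rank + k ≤ n) :
    k ≤ Module.finrank ℝ (LinearMap.ker (Matrix.of X).vecMulLinear) := by
  have h1 : Module.finrank ℝ (LinearMap.range ((Matrix.transpose (Matrix.of X)).mulVecLin)) +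
      Module.finrank ℝ (LinearMap.ker ((Matrix.transpose (Matrix.of X)).mulVecLin)) = n := by
    have h := LinearMap.finrank_range_add_finrank_ker ((Matrix.transpose (Matrix.of X)).mulVecLin)
    rwa [Module.finrank_pi, Fintype.card_fin] at h
  have h2 : Module.finrank ℝ (LinearMap.range ((Matrix.transpose (Matrix.of X)).mulVecLin)) =
      (Matrix.of X).rank := by
    show (Matrix.transpose (Matrix.of X)).rank = (Matrix.of X).rank
    exact Matrix.rank_transpose _
  have h3 : LinearMap.ker ((Matrix.transpose (Matrix.of X)).mulVecLin) =
      LinearMap.ker ((Matrix.of X).vecMulLinear) := by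
    rw [Matrix.mulVecLin_transpose]
  rw [h2, h3] at h1
  omega

lemma card_badSet_le (X : Fin n → Fin n → ℝ) (η : ℝ)
    (hW : k ≤ Module.finrank ℝ (LinearMap.ker (Matrix.of X).vecMulLinear))
    (hk1 : 1 ≤ k)
    (hG : ∀ y : Fin n → ℝ, y ≠ 0 → Matrix.vecMul y (Matrix.of X) = 0 →
       ¬(((Finset.univ.filter fun i => y i ≠ 0).card : ℝ) ≤ (1 - η) * n))
    (g : Fin k → Fin n) (l : Fin k) :
    ((BadSet X g l).card : ℝ) ≤ η * n := by
  set W := LinearMap.ker (Matrix.of X).vecMulLinear with hWdef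
  set Φ : (Fin n → ℝ) →ₗ[ℝ] (Fin k → ℝ) :=
    LinearMap.pi (fun l' : Fin k => if l' < l then LinearMap.proj (g l') else 0) with hΦ
  set Φ' : W →ₗ[ℝ] (Fin k → ℝ) := Φ.comp W.subtype with hΦ'
  -- the kernel of the coordinate projection at `l` has dimension `k - 1`
  have hproj : Module.finrank ℝ (LinearMap.ker (LinearMap.proj (R := ℝ)
      (φ := fun _ : Fin k => ℝ) l)) = k - 1 := by
    have hsurj : Function.Surjective (LinearMap.proj (R := ℝ) (φ := fun _ : Fin k => ℝ) l) := by
      intro r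
      exact ⟨Function.update 0 l r, by simp⟩
    have h := LinearMap.finrank_range_add_finrank_ker
      (LinearMap.proj (R := ℝ) (φ := fun _ : Fin k => ℝ) l)
    rw [Module.finrank_pi, Fintype.card_fin, LinearMap.range_eq_top.2 hsurj, finrank_top,
      Module.finrank_self] at h
    omega
  have hrange : LinearMap.range Φ' ≤ LinearMap.ker (LinearMap.proj (R := ℝ)
      (φ := fun _ : Fin k => ℝ) l) := by
    rintro x ⟨w, rfl⟩
    show Φ ((W.subtype) w) l = 0
    simp [hΦ, LinearMap.pi_apply, lt_irrefl]
  have hrk : Module.finrank ℝ (LinearMap.range Φ') ≤ k - 1 := by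
    rw [← hproj]
    exact Submodule.finrank_mono hrange
  have hkerΦ' : 1 ≤ Module.finrank ℝ (LinearMap.ker Φ') := by
    have h := LinearMap.finrank_range_add_finrank_ker Φ'
    omega
  have hne : LinearMap.ker Φ' ≠ ⊥ := by
    intro hbot
    rw [hbot, finrank_bot] at hkerΦ'
    omega
  obtain ⟨y₀, hy₀mem, hy₀ne⟩ := Submodule.exists_mem_ne_zero_of_ne_bot hne
  set y : Fin n → ℝ := (y₀ : Fin n → ℝ) with hy
  have hynull : Matrix.vecMul y (Matrix.of X) = 0 := by
    have := y₀.2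
    rwa [LinearMap.mem_ker, Matrix.vecMulLinear_apply] at this
  have hyne : y ≠ 0 := fun h => hy₀ne (by
    apply Subtype.coe_injective
    exact h)
  have hyzero : ∀ l' : Fin k, l' < l → y (g l') = 0 := by
    intro l' hl'
    have h := hy₀mem
    rw [LinearMap.mem_ker] at h
    have := congrFun (congrArg (fun v => (v : Fin k → ℝ)) h) l'
    simpa [hΦ', hΦ, LinearMap.pi_apply, if_pos hl'] using this
  have hsupp : (1 - η) * n < ((Finset.univ.filter fun i => y i ≠ 0).card : ℝ) :=
    not_le.1 (hG y hyne hynull)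
  have hsub : BadSet X g l ⊆ Finset.univ.filter fun i => y i = 0 := by
    intro v hv
    simp only [BadSet, Finset.mem_filter, Finset.mem_univ, true_and] at hv ⊢
    exact hv y hynull hyzero
  have hcards : (BadSet X g l).card + (Finset.univ.filter fun i => y i ≠ 0).card ≤ n := by
    have hdisj : Disjoint (Finset.univ.filter fun i => y i = 0)
        (Finset.univ.filter fun i => y i ≠ 0) := by
      rw [Finset.disjoint_filter]
      intro i _ h1 h2
      exact h2 h1
    calc (BadSet X g l).card + (Finset.univ.filter fun i => y i ≠ 0).card
        ≤ (Finset.univ.filter fun i => y i = 0).card +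
          (Finset.univ.filter fun i => y i ≠ 0).card := by
          exact Nat.add_le_add_right (Finset.card_le_card hsub) _
      _ = ((Finset.univ.filter fun i => y i = 0) ∪
          (Finset.univ.filter fun i => y i ≠ 0)).card :=
          (Finset.card_union_of_disjoint hdisj).symm
      _ ≤ (Finset.univ : Finset (Fin n)).card := Finset.card_le_card (Finset.subset_univ _)
      _ = n := Finset.card_univ.trans (Fintype.card_fin n)
  have : ((BadSet X g l).card : ℝ) + ((Finset.univ.filter fun i => y i ≠ 0).card : ℝ) ≤ n := by
    exact_mod_cast hcards
  linarith

lemma update_mem_inj {f : Fin k → Fin n} (hf : Function.Injective f) {l : Fin k} {v : Fin n}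
    (hv : ∀ l' : Fin k, l' ≠ l → v ≠ f l') : Function.Injective (Function.update f l v) := by
  intro a b hab
  by_cases ha : a = l <;> by_cases hb : b = l
  · rw [ha, hb]
  · rw [ha] at hab ⊢
    rw [Function.update_self, Function.update_of_ne hb] at hab
    exact absurd hab (hv b hb)
  · rw [hb] at hab ⊢
    rw [Function.update_of_ne ha, Function.update_self] at hab
    exact absurd hab.symm (hv a ha)
  · rw [Function.update_of_ne ha, Function.update_of_ne hb] at hab
    exact hf hab

lemma core_count (hk1 : 1 ≤ k) (hk2 : k ≤ n / 2) {η : ℝ} (hη0 : 0 < η)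
    (X : Fin n → Fin n → ℝ) (hrank : (Matrix.of X).rank + k ≤ n)
    (hG : ∀ y : Fin n → ℝ, y ≠ 0 → Matrix.vecMul y (Matrix.of X) = 0 →
       ¬(((Finset.univ.filter fun i => y i ≠ 0).card : ℝ) ≤ (1 - η) * n)) :
    (1 - 2 * η * k) *
        ((Finset.univ.filter fun f : Fin k → Fin n => Function.Injective f).card : ℝ) ≤
      ((Finset.univ.filter fun f : Fin k → Fin n => Function.Injective f ∧
        ∀ l : Fin k, X (f l) ∈
          Submodule.span ℝ (X '' {i : Fin n | ∀ l' : Fin k, i ≠ f l'})).card : ℝ) := by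
  have hkn : k ≤ n := hk2.trans (Nat.div_le_self n 2)
  set s : Finset (Fin k → Fin n) := Finset.univ.filter fun f => Function.Injective f with hs
  set goodF : Finset (Fin k → Fin n) := Finset.univ.filter fun f => Function.Injective f ∧
    ∀ l : Fin k, X (f l) ∈ Submodule.span ℝ (X '' {i : Fin n | ∀ l' : Fin k, i ≠ f l'}) with hgood
  set badF : Finset (Fin k → Fin n) :=
    s.filter (fun f => ∃ l : Fin k, f l ∈ BadSet X f l) with hbad
  set T : Fin k → Finset (Fin k → Fin n) :=
    fun l => s.filter (fun f => f l ∈ BadSet X f l) with hT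
  -- s is covered by badF and goodF
  have hcover : s.card ≤ badF.card + goodF.card := by
    have hsub : s ⊆ badF ∪ goodF := by
      intro f hfs
      have hfi : Function.Injective f := by
        rw [hs, Finset.mem_filter] at hfs; exact hfs.2
      by_cases hb : ∃ l : Fin k, f l ∈ BadSet X f l
      · exact Finset.mem_union_left _ (by rw [hbad, Finset.mem_filter]; exact ⟨hfs, hb⟩)
      · push_neg at hb
        refine Finset.mem_union_right _ ?_
        rw [hgood, Finset.mem_filter]
        exact ⟨Finset.mem_univ f, hfi, good_of_notBad X hfi hb⟩
    exact (Finset.card_le_card hsub).trans (Finset.card_union_le _ _)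
  -- badF is covered by the T l
  have hbadcover : badF.card ≤ ∑ l : Fin k, (T l).card := by
    have hsub : badF ⊆ Finset.univ.biUnion T := by
      intro f hf
      rw [hbad, Finset.mem_filter] at hf
      obtain ⟨hfs, l, hl⟩ := hf
      exact Finset.mem_biUnion.2 ⟨l, Finset.mem_univ l, by
        rw [hT, Finset.mem_filter]; exact ⟨hfs, hl⟩⟩
    exact (Finset.card_le_card hsub).trans (Finset.card_biUnion_le)
  -- bound each T l
  have hTl : ∀ l : Fin k, ((T l).card : ℝ) ≤ 2 * η * s.card := by
    intro l
    set D : Finset ((_ : Fin k → Fin n) × Fin n) :=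
      (T l).sigma (fun f => Finset.univ \ (Finset.univ.erase l).image f) with hD
    set E : Finset ((_ : Fin k → Fin n) × Fin n) :=
      s.sigma (fun f => BadSet X f l) with hE
    have hcardDE : D.card ≤ E.card := by
      refine Finset.card_le_card_of_injOn
        (fun p => ⟨Function.update p.1 l p.2, p.1 l⟩) ?_ ?_
      · rintro ⟨f, v⟩ hp
        simp only [Finset.mem_coe, hD, Finset.mem_sigma] at hp
        obtain ⟨hfT, hv⟩ := hp
        rw [hT, Finset.mem_filter] at hfT
        obtain ⟨hfs, hfbad⟩ := hfT
        rw [hs, Finset.mem_filter] at hfs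
        have hfi : Function.Injective f := hfs.2
        rw [Finset.mem_sdiff] at hv
        have hvni : ∀ l' : Fin k, l' ≠ l → v ≠ f l' := by
          intro l' hl' hveq
          exact hv.2 (Finset.mem_image.2 ⟨l', Finset.mem_erase.2 ⟨hl', Finset.mem_univ l'⟩,
            hveq.symm⟩)
        rw [Finset.mem_coe, hE, Finset.mem_sigma]
        constructor
        · rw [hs, Finset.mem_filter]
          exact ⟨Finset.mem_univ _, update_mem_inj hfi hvni⟩
        · have hcongr : BadSet X (Function.update f l v) l = BadSet X f l :=
            badSet_congr X l fun l' hl' =>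
              Function.update_of_ne (ne_of_lt hl') v f
          rw [hcongr]
          exact hfbad
      · rintro ⟨f, v⟩ hp ⟨f', v'⟩ hp' heq
        have h1 : Function.update f l v = Function.update f' l v' :=
          congrArg Sigma.fst heq
        have h2' : f l = f' l :=
          congrArg (fun q : ((_ : Fin k → Fin n) × Fin n) => q.snd) heq
        have hff' : f = f' := by
          funext a
          rcases eq_or_ne a l with rfl | ha
          · exact h2'
          · have := congrFun h1 a
            rwa [Function.update_of_ne ha, Function.update_of_ne ha] at this
        subst hff'
        have hvv' : v = v' := by
          have := congrFun h1 l
          rwa [Function.update_self, Function.update_self] at this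
        rw [hvv']
    have hDcard : (T l).card * (n - k + 1) ≤ D.card := by
      rw [hD, Finset.card_sigma]
      have : ∀ f ∈ T l, n - k + 1 ≤ (Finset.univ \ (Finset.univ.erase l).image f).card := by
        intro f _
        rw [Finset.card_sdiff_of_subset (Finset.subset_univ _)]
        have h1 : ((Finset.univ.erase l).image f).card ≤ k - 1 := by
          refine (Finset.card_image_le).trans ?_
          rw [Finset.card_erase_of_mem (Finset.mem_univ l), Finset.card_univ, Fintype.card_fin]
        have h2 : (Finset.univ : Finset (Fin n)).card = n := by
          rw [Finset.card_univ, Fintype.card_fin]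
        omega
      calc (T l).card * (n - k + 1) = ∑ _f ∈ T l, (n - k + 1) := by
            rw [Finset.sum_const, smul_eq_mul]
        _ ≤ ∑ f ∈ T l, (Finset.univ \ (Finset.univ.erase l).image f).card :=
            Finset.sum_le_sum this
    have hEcard : (E.card : ℝ) ≤ (s.card : ℝ) * (η * n) := by
      rw [hE, Finset.card_sigma]
      push_cast
      calc ∑ f ∈ s, ((BadSet X f l).card : ℝ) ≤ ∑ _f ∈ s, η * n :=
            Finset.sum_le_sum fun f _ =>
              card_badSet_le X η (finrank_ker_ge X hrank) hk1 hG f l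
        _ = (s.card : ℝ) * (η * n) := by rw [Finset.sum_const, nsmul_eq_mul]
    -- combine
    have hm : (0:ℝ) < ((n - k + 1 : ℕ) : ℝ) := by positivity
    have hkey : ((T l).card : ℝ) * ((n - k + 1 : ℕ) : ℝ) ≤ (s.card : ℝ) * (η * n) := by
      calc ((T l).card : ℝ) * ((n - k + 1 : ℕ) : ℝ)
          = (((T l).card * (n - k + 1) : ℕ) : ℝ) := by push_cast; ring
        _ ≤ (D.card : ℝ) := by exact_mod_cast hDcard
        _ ≤ (E.card : ℝ) := by exact_mod_cast hcardDE
        _ ≤ (s.card : ℝ) * (η * n) := hEcard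
    have hn2m : (n : ℝ) ≤ 2 * ((n - k + 1 : ℕ) : ℝ) := by
      have : n ≤ 2 * (n - k + 1) := by omega
      exact_mod_cast this
    have h2 : (s.card : ℝ) * (η * n) ≤
        (2 * η * s.card) * ((n - k + 1 : ℕ) : ℝ) := by
      have hsc : (0:ℝ) ≤ (s.card : ℝ) := Nat.cast_nonneg _
      calc (s.card : ℝ) * (η * n) = ((s.card : ℝ) * η) * n := by ring
        _ ≤ ((s.card : ℝ) * η) * (2 * ((n - k + 1 : ℕ) : ℝ)) :=
            mul_le_mul_of_nonneg_left hn2m (mul_nonneg hsc hη0.le)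
        _ = (2 * η * s.card) * ((n - k + 1 : ℕ) : ℝ) := by ring
    have := hkey.trans h2
    exact le_of_mul_le_mul_right this hm
  -- assemble
  have hsum : (∑ l : Fin k, ((T l).card : ℝ)) ≤ k * (2 * η * s.card) := by
    calc (∑ l : Fin k, ((T l).card : ℝ)) ≤ ∑ _l : Fin k, 2 * η * s.card :=
          Finset.sum_le_sum fun l _ => hTl l
      _ = k * (2 * η * s.card) := by
          rw [Finset.sum_const, nsmul_eq_mul, Finset.card_univ, Fintype.card_fin]
  have hc1 : (s.card : ℝ) ≤ (badF.card : ℝ) + (goodF.card : ℝ) := by exact_mod_cast hcover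
  have hc2 : (badF.card : ℝ) ≤ ∑ l : Fin k, ((T l).card : ℝ) := by
    calc (badF.card : ℝ) ≤ ((∑ l : Fin k, (T l).card : ℕ) : ℝ) := by exact_mod_cast hbadcover
      _ = ∑ l : Fin k, ((T l).card : ℝ) := by push_cast; rfl
  have := hc2.trans hsum
  nlinarith [hc1]

end CorankAux

open CorankAux in
theorem corank_k_by_sampling
    {Ω : Type*} [MeasurableSpace Ω] (μ : Measure Ω) [IsProbabilityMeasure μ]
    (n k : ℕ) (hk : 1 ≤ k ∧ k ≤ n / 2)
    (M : Ω → Fin n → Fin n → ℝ) (hM : Measurable M)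
    (hinj : (Finset.univ.filter fun f : Fin k → Fin n => Function.Injective f).Nonempty)
    (η : ℝ) (hη : 0 < η ∧ η < 1 / (2 * k)) :
    μ {ω : Ω | (Matrix.of (M ω)).rank + k ≤ n ∧
        ¬∃ y : Fin n → ℝ, y ≠ 0 ∧
          ((Finset.univ.filter fun i => y i ≠ 0).card : ℝ) ≤ (1 - η) * n ∧
          Matrix.vecMul y (Matrix.of (M ω)) = 0} ≤
      ENNReal.ofReal (1 / (1 - 2 * η * k)) *
        (μ.prod (PMF.uniformOfFinset
            (Finset.univ.filter fun f : Fin k → Fin n => Function.Injective f)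
            hinj).toMeasure)
          {p : Ω × (Fin k → Fin n) |
            (∀ l : Fin k, M p.1 (p.2 l) ∈
              Submodule.span ℝ (M p.1 '' {i : Fin n | ∀ l : Fin k, i ≠ p.2 l})) ∧
            ¬∃ y : Fin n → ℝ, y ≠ 0 ∧
              ((Finset.univ.filter fun i => y i ≠ 0).card : ℝ) ≤ (1 - η) * n ∧
              Matrix.vecMul y (Matrix.of (M p.1)) = 0} := by
  obtain ⟨hk1, hk2⟩ := hk
  obtain ⟨hη0, hη1⟩ := hη
  have h2ηk : 2 * η * k < 1 := by
    have hkpos : (0:ℝ) < 2 * k := by positivity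
    rw [lt_div_iff₀ hkpos] at hη1
    linarith
  set s : Finset (Fin k → Fin n) :=
    Finset.univ.filter fun f : Fin k → Fin n => Function.Injective f with hs
  have hNpos : 0 < s.card := Finset.card_pos.2 hinj
  set ν : Measure (Fin k → Fin n) := (PMF.uniformOfFinset s hinj).toMeasure with hν
  -- the "bad sparse left null vector exists" set of matrices
  set Gm : Set (Fin n → Fin n → ℝ) := {X | ∃ y : Fin n → ℝ, y ≠ 0 ∧
    ((Finset.univ.filter fun i => y i ≠ 0).card : ℝ) ≤ (1 - η) * n ∧
    Matrix.vecMul y (Matrix.of X) = 0} with hGm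
  have hGmM : MeasurableSet Gm := measurableSet_G ((1 - η) * n)
  -- the per-tuple event
  set B : (Fin k → Fin n) → Set Ω := fun g =>
    M ⁻¹' ((⋂ l : Fin k, {X : Fin n → Fin n → ℝ |
      X (g l) ∈ Submodule.span ℝ (X '' {i : Fin n | ∀ l' : Fin k, i ≠ g l'})}) ∩ Gmᶜ) with hB
  have hBmeas : ∀ g : Fin k → Fin n, MeasurableSet (B g) := by
    intro g
    apply hM
    refine MeasurableSet.inter (MeasurableSet.iInter fun l => ?_) hGmM.compl
    have hTset : {i : Fin n | ∀ l' : Fin k, i ≠ g l'} =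
        ↑(Finset.univ.filter fun i : Fin n => ∀ l' : Fin k, i ≠ g l') := by
      ext i; simp
    rw [hTset]
    exact measurableSet_memSpan _ _
  set A : Set Ω := {ω : Ω | (Matrix.of (M ω)).rank + k ≤ n ∧
      ¬∃ y : Fin n → ℝ, y ≠ 0 ∧
        ((Finset.univ.filter fun i => y i ≠ 0).card : ℝ) ≤ (1 - η) * n ∧
        Matrix.vecMul y (Matrix.of (M ω)) = 0} with hA
  set hfun : Ω → ℝ≥0∞ := fun ω => ∑ g ∈ s, (B g).indicator (1 : Ω → ℝ≥0∞) ω with hhfun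
  -- pointwise estimate on A
  have hptwise : A ⊆ {ω : Ω | ENNReal.ofReal ((1 - 2 * η * k) * s.card) ≤ hfun ω} := by
    intro ω hω
    obtain ⟨hrank, hGω⟩ := hω
    have hGimp : ∀ y : Fin n → ℝ, y ≠ 0 → Matrix.vecMul y (Matrix.of (M ω)) = 0 →
        ¬(((Finset.univ.filter fun i => y i ≠ 0).card : ℝ) ≤ (1 - η) * n) :=
      fun y hy hvm hcard => hGω ⟨y, hy, hcard, hvm⟩
    have hcore := core_count hk1 hk2 hη0 (M ω) hrank hGimp
    set goodF : Finset (Fin k → Fin n) := Finset.univ.filter fun f : Fin k → Fin n =>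
      Function.Injective f ∧ ∀ l : Fin k, (M ω) (f l) ∈
        Submodule.span ℝ ((M ω) '' {i : Fin n | ∀ l' : Fin k, i ≠ f l'}) with hgoodF
    have hgsub : goodF ⊆ s := by
      intro f hf
      rw [hgoodF, Finset.mem_filter] at hf
      rw [hs, Finset.mem_filter]
      exact ⟨Finset.mem_univ f, hf.2.1⟩
    have hgB : ∀ f ∈ goodF, ω ∈ B f := by
      intro f hf
      rw [hgoodF, Finset.mem_filter] at hf
      rw [hB]
      refine ⟨Set.mem_iInter.2 fun l => hf.2.2 l, ?_⟩
      exact hGω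
    have hsum : (goodF.card : ℝ≥0∞) ≤ hfun ω := by
      have h1 : ∀ f ∈ goodF, (B f).indicator (1 : Ω → ℝ≥0∞) ω = 1 := by
        intro f hf
        rw [Set.indicator_of_mem (hgB f hf)]
        rfl
      calc (goodF.card : ℝ≥0∞) = ∑ _f ∈ goodF, 1 := by
            rw [Finset.sum_const, nsmul_eq_mul, mul_one]
        _ = ∑ f ∈ goodF, (B f).indicator (1 : Ω → ℝ≥0∞) ω :=
            (Finset.sum_congr rfl h1).symm
        _ ≤ hfun ω := Finset.sum_le_sum_of_subset hgsub
    refine le_trans ?_ hsum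
    calc ENNReal.ofReal ((1 - 2 * η * k) * s.card) ≤ ENNReal.ofReal (goodF.card : ℝ) :=
          ENNReal.ofReal_le_ofReal hcore
      _ = (goodF.card : ℝ≥0∞) := ENNReal.ofReal_natCast _
  -- Markov
  have hmeas_hfun : Measurable hfun :=
    Finset.measurable_sum s fun g _ => (measurable_const.indicator (hBmeas g))
  have hlint : ∫⁻ ω, hfun ω ∂μ = ∑ g ∈ s, μ (B g) := by
    simp only [hhfun]
    rw [lintegral_finset_sum (f := fun g => (B g).indicator (1 : Ω → ℝ≥0∞)) s
      (fun g _ => measurable_const.indicator (hBmeas g))]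
    exact Finset.sum_congr rfl fun g _ => lintegral_indicator_one (hBmeas g)
  have hmarkov : ENNReal.ofReal ((1 - 2 * η * k) * s.card) * μ A ≤ ∑ g ∈ s, μ (B g) := by
    calc ENNReal.ofReal ((1 - 2 * η * k) * s.card) * μ A
        ≤ ENNReal.ofReal ((1 - 2 * η * k) * s.card) *
          μ {ω : Ω | ENNReal.ofReal ((1 - 2 * η * k) * s.card) ≤ hfun ω} :=
          mul_le_mul_right (measure_mono hptwise) _
      _ ≤ ∫⁻ ω, hfun ω ∂μ := mul_meas_ge_le_lintegral₀ hmeas_hfun.aemeasurable _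
      _ = ∑ g ∈ s, μ (B g) := hlint
  -- compute the product measure of the RHS event
  set Bprod : Set (Ω × (Fin k → Fin n)) := {p : Ω × (Fin k → Fin n) |
    (∀ l : Fin k, M p.1 (p.2 l) ∈
      Submodule.span ℝ (M p.1 '' {i : Fin n | ∀ l : Fin k, i ≠ p.2 l})) ∧
    ¬∃ y : Fin n → ℝ, y ≠ 0 ∧
      ((Finset.univ.filter fun i => y i ≠ 0).card : ℝ) ≤ (1 - η) * n ∧
      Matrix.vecMul y (Matrix.of (M p.1)) = 0} with hBprod
  have hBdecomp : Bprod = ⋃ g : Fin k → Fin n, (B g) ×ˢ ({g} : Set (Fin k → Fin n)) := by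
    ext ⟨ω, f⟩
    simp only [hBprod, Set.mem_setOf_eq, Set.mem_iUnion, Set.mem_prod, Set.mem_singleton_iff]
    constructor
    · rintro ⟨h1, h2⟩
      exact ⟨f, ⟨Set.mem_iInter.2 fun l => h1 l, h2⟩, rfl⟩
    · rintro ⟨g, ⟨hg1, hg2⟩, rfl⟩
      exact ⟨fun l => Set.mem_iInter.1 hg1 l, hg2⟩
  have hprodval : (μ.prod ν) Bprod = ∑ g ∈ s, μ (B g) * (s.card : ℝ≥0∞)⁻¹ := by
    rw [hBdecomp]
    rw [measure_iUnion ?_ fun g => (hBmeas g).prod (measurableSet_singleton g)]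
    · rw [tsum_fintype]
      have h1 : ∀ g : Fin k → Fin n, (μ.prod ν) ((B g) ×ˢ ({g} : Set (Fin k → Fin n))) =
          μ (B g) * ν {g} := fun g => Measure.prod_prod _ _
      rw [Finset.sum_congr rfl fun g _ => h1 g]
      rw [← Finset.sum_subset (Finset.subset_univ s) ?_]
      · refine Finset.sum_congr rfl fun g hg => ?_
        congr 1
        rw [hν, PMF.toMeasure_apply_singleton _ _ (measurableSet_singleton g),
          PMF.uniformOfFinset_apply_of_mem hinj hg]
      · intro g _ hg
        rw [hν, PMF.toMeasure_apply_singleton _ _ (measurableSet_singleton g),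
          PMF.uniformOfFinset_apply_of_notMem hinj hg, mul_zero]
    · intro g g' hgg'
      simp only [Function.onFun]
      rw [Set.disjoint_left]
      rintro ⟨ω, f⟩ ⟨-, hf⟩ ⟨-, hf'⟩
      exact hgg' (hf.symm.trans hf')
  -- final arithmetic
  have h1pos : (0:ℝ) < 1 - 2 * η * k := by linarith
  have haN : (0:ℝ) < (1 - 2 * η * k) * s.card := by
    have h : (0:ℝ) < (s.card : ℝ) := by exact_mod_cast hNpos
    exact mul_pos h1pos h
  set a : ℝ≥0∞ := ENNReal.ofReal ((1 - 2 * η * k) * s.card) with ha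
  have ha0 : a ≠ 0 := by
    rw [ha]
    exact (ENNReal.ofReal_pos.2 haN).ne'
  have hatop : a ≠ ⊤ := ENNReal.ofReal_ne_top
  have hμA : μ A ≤ a⁻¹ * ∑ g ∈ s, μ (B g) := by
    have : μ A = a⁻¹ * (a * μ A) := by
      rw [← mul_assoc, ENNReal.inv_mul_cancel ha0 hatop, one_mul]
    rw [this]
    exact mul_le_mul_right hmarkov _
  have hfinal : a⁻¹ * ∑ g ∈ s, μ (B g) =
      ENNReal.ofReal (1 / (1 - 2 * η * k)) * ∑ g ∈ s, μ (B g) * (s.card : ℝ≥0∞)⁻¹ := by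
    have hsplit : a = ENNReal.ofReal (1 - 2 * η * k) * (s.card : ℝ≥0∞) := by
      rw [ha, ENNReal.ofReal_mul h1pos.le, ENNReal.ofReal_natCast]
    have hainv : a⁻¹ = (ENNReal.ofReal (1 - 2 * η * k))⁻¹ * (s.card : ℝ≥0∞)⁻¹ := by
      rw [hsplit, ENNReal.mul_inv (Or.inl (ENNReal.ofReal_pos.2 h1pos).ne')
        (Or.inl ENNReal.ofReal_ne_top)]
    have hof : ENNReal.ofReal (1 / (1 - 2 * η * k)) =
        (ENNReal.ofReal (1 - 2 * η * k))⁻¹ := by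
      rw [one_div, ENNReal.ofReal_inv_of_pos h1pos]
    rw [hainv, hof, ← Finset.sum_mul]
    ring
  calc μ A ≤ a⁻¹ * ∑ g ∈ s, μ (B g) := hμA
    _ = ENNReal.ofReal (1 / (1 - 2 * η * k)) * ∑ g ∈ s, μ (B g) * (s.card : ℝ≥0∞)⁻¹ := hfinal
    _ = ENNReal.ofReal (1 / (1 - 2 * η * k)) * (μ.prod ν) Bprod := by rw [hprodval]

end
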